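/- Let G be a C^∞ Lie group modelled on I : ModelWithCorners ℝ E H and let S : G → Submodule ℝ E be a multiplicative distribution on G. Then the fiber S 1 at the identity is invariant under the adjoint action of G: for every g : G, Submodule.map (mfderiv I I (fun x => g * x * g⁻¹) 1) (S 1) = S 1, i.e. the tangent map at the identity of conjugation by g maps S(1) onto S(1). -/

import Mathlib

open Manifold

section Aux

variable {E : Type*} [NormedAddCommGroup E] [NormedSpace ℝ E]
    {H : Type*} [TopologicalSpace H] (I : ModelWithCorners ℝ E H)
    {G : Type*} [TopologicalSpace G] [ChartedSpace H G] [Group G] [LieGroup I (⊤ : ℕ∞) G]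

theorem aux_mfderiv_mul_left (g x : G) (v : E) :
    mfderiv (I.prod I) I (fun p : G × G => p.1 * p.2) (g, x)
      (((0 : E), v) : TangentSpace (I.prod I) (g, x))
      = mfderiv I I (fun y => g * y) x v := by
  have h1 : MDifferentiableAt (I.prod I) I (fun p : G × G => p.1 * p.2) (g, x) :=
    ((contMDiff_mul I ((⊤ : ℕ∞) : WithTop ℕ∞)).contMDiffAt).mdifferentiableAt (by simp)
  have h2 : MDifferentiableAt I (I.prod I) (fun y : G => (g, y)) x :=
    (mdifferentiableAt_const.prodMk mdifferentiableAt_id)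
  have hc := mfderiv_comp x h1 h2
  have : mfderiv I I (fun y => g * y) x =
      (mfderiv (I.prod I) I (fun p : G × G => p.1 * p.2) (g, x)).comp
        (mfderiv I (I.prod I) (fun y : G => (g, y)) x) := hc
  rw [this, mfderiv_prod_right]
  rfl

theorem aux_mfderiv_mul_right (g x : G) (v : E) :
    mfderiv (I.prod I) I (fun p : G × G => p.1 * p.2) (x, g)
      ((v, (0 : E)) : TangentSpace (I.prod I) (x, g))
      = mfderiv I I (fun y => y * g) x v := by
  have h1 : MDifferentiableAt (I.prod I) I (fun p : G × G => p.1 * p.2) (x, g) :=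
    ((contMDiff_mul I ((⊤ : ℕ∞) : WithTop ℕ∞)).contMDiffAt).mdifferentiableAt (by simp)
  have h2 : MDifferentiableAt I (I.prod I) (fun y : G => (y, g)) x :=
    (mdifferentiableAt_id.prodMk mdifferentiableAt_const)
  have hc := mfderiv_comp x h1 h2
  have : mfderiv I I (fun y => y * g) x =
      (mfderiv (I.prod I) I (fun p : G × G => p.1 * p.2) (x, g)).comp
        (mfderiv I (I.prod I) (fun y : G => (y, g)) x) := hc
  rw [this, mfderiv_prod_left]
  rfl

theorem mfderiv_point_congr (f : G → G) {x y : G} (h : x = y) :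
    (mfderiv I I f x : E →L[ℝ] E) = mfderiv I I f y := by subst h; rfl

theorem aux_mfderiv_conj (g : G) :
    mfderiv I I (fun x : G => g * x * g⁻¹) 1 =
      (mfderiv I I (fun y => y * g⁻¹) g).comp (mfderiv I I (fun y => g * y) 1) := by
  have h1 : MDifferentiableAt I I (fun y : G => y * g⁻¹) ((fun y : G => g * y) 1) :=
    mdifferentiableAt_mul_right
  have h2 : MDifferentiableAt I I (fun y : G => g * y) 1 :=
    mdifferentiableAt_mul_left
  have hc := mfderiv_comp (1 : G) h1 h2
  rw [mfderiv_point_congr I (fun y : G => y * g⁻¹) (mul_one g)] at hc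
  exact hc

theorem aux_conj_mem {S : G → Submodule ℝ E}
    (hS : ∀ (g h : G) (v w : E), v ∈ S g → w ∈ S h →
      mfderiv (I.prod I) I (fun p : G × G => p.1 * p.2) (g, h)
        ((v, w) : TangentSpace (I.prod I) (g, h)) ∈ S (g * h))
    (g : G) {v : E} (hv : v ∈ S 1) :
    mfderiv I I (fun x : G => g * x * g⁻¹) 1 v ∈ S 1 := by
  rw [aux_mfderiv_conj]
  have h1 : mfderiv I I (fun y => g * y) 1 v ∈ S g := by
    have := hS g 1 0 v (zero_mem _) hv
    rw [aux_mfderiv_mul_left I g 1 v] at this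
    simpa using this
  have h2 := hS g g⁻¹ _ 0 h1 (zero_mem _)
  erw [aux_mfderiv_mul_right I g⁻¹ g] at h2
  simp at h2
  exact h2

end Aux

/-- The fiber at the identity of a multiplicative distribution on a Lie group is
invariant under the adjoint action: the tangent map at the identity of the conjugation
by `g` maps `S 1` onto `S 1`. -/
theorem stmt_7 {E : Type*} [NormedAddCommGroup E] [NormedSpace ℝ E]
    {H : Type*} [TopologicalSpace H] (I : ModelWithCorners ℝ E H)
    {G : Type*} [TopologicalSpace G] [ChartedSpace H G] [Group G] [LieGroup I (⊤ : ℕ∞) G]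
    (S : G → Submodule ℝ E)
    (hS : ∀ (g h : G) (v w : E), v ∈ S g → w ∈ S h →
      mfderiv (I.prod I) I (fun p : G × G => p.1 * p.2) (g, h)
        ((v, w) : TangentSpace (I.prod I) (g, h)) ∈ S (g * h)) :
    ∀ g : G, Submodule.map ((show E →L[ℝ] E from mfderiv I I (fun x : G => g * x * g⁻¹) 1) : E →ₗ[ℝ] E) (S 1) = S 1 := by
  intro g
  apply le_antisymm
  · rintro _ ⟨v, hv, rfl⟩
    exact aux_conj_mem I hS g hv
  · intro v hv
    have hw : mfderiv I I (fun x : G => g⁻¹ * x * g) 1 v ∈ S 1 := by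
      have := aux_conj_mem I hS g⁻¹ hv
      rwa [inv_inv] at this
    refine ⟨_, hw, ?_⟩
    -- conjugation by g composed with conjugation by g⁻¹ is the identity
    have hcomp : mfderiv I I (fun x : G => g * x * g⁻¹) 1
        (mfderiv I I (fun x : G => g⁻¹ * x * g) 1 v) = v := by
      have h1 : MDifferentiableAt I I (fun x : G => g * x * g⁻¹)
          ((fun x : G => g⁻¹ * x * g) 1) :=
        (mdifferentiableAt_mul_right.comp _ mdifferentiableAt_mul_left)
      have h2 : MDifferentiableAt I I (fun x : G => g⁻¹ * x * g) 1 :=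
        (mdifferentiableAt_mul_right.comp _ mdifferentiableAt_mul_left)
      have hc := mfderiv_comp (1 : G) h1 h2
      have hid : (fun x : G => g * x * g⁻¹) ∘ (fun x : G => g⁻¹ * x * g) = id := by
        funext x; simp [Function.comp, mul_assoc]
      rw [hid, mfderiv_id,
        mfderiv_point_congr I (fun x : G => g * x * g⁻¹)
          (show g⁻¹ * 1 * g = 1 by simp)] at hc
      have := congrArg (fun f => f v) hc
      exact this.symm
    exact hcomp
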